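/- Let T be a set of measurable functions from a measurable space E to ℝ such that for each x ∈ E^n the set {(t(x_1),…,t(x_n)) : t ∈ T} is bounded. Let w ∈ ℝ^n, let a = min_i w_i and b = max_i w_i, and for x ∈ E^n define g_x(π) = sup_{t∈T} Σ_{i=1}^n w_{π(i)} t(x_i) for π in the symmetric group S_n. Let σ be a uniform random permutation and V_+(g_x,σ) = (1/n²) Σ_{i=1}^n Σ_{j=1}^n (g_x(σ) − g_x(σ τ_{i,j}))_+². Then almost surely V_+(g_x,σ) ≤ (2/n) (b−a)² v_+(x), where v_+(x) = sup_{t∈T} Σ_{i=1}^n ( t(x_i) − (1/n) Σ_{j=1}^n t(x_j) )². If in addition every function in T takes values in [−1,1], then almost surely V_+(g_x,σ) ≤ (8/n) ‖w‖², where ‖w‖ is the Euclidean norm of w. -/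

import Mathlib

open MeasureTheory

lemma sum_const_add_fin {n : ℕ} (K : ℝ) (f : Fin n → Fin n → ℝ) :
    ∑ i : Fin n, ∑ j : Fin n, (K + f i j) = (n:ℝ)^2 * K + ∑ i : Fin n, ∑ j : Fin n, f i j := by
  simp [Finset.sum_add_distrib, Finset.card_univ]
  ring

lemma expand_sumsq {n : ℕ} (v : Fin n → ℝ) :
    ∑ i : Fin n, ∑ j : Fin n, (v i - v j)^2
      = 2*(n:ℝ)*(∑ i, v i^2) - 2*(∑ i, v i)^2 := by
  have h : ∀ i : Fin n, ∑ j : Fin n, (v i - v j)^2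
      = (n:ℝ) * v i^2 - 2 * v i * (∑ j, v j) + ∑ j, v j^2 := by
    intro i
    have e : ∀ j : Fin n, (v i - v j)^2 = v i^2 - 2 * v i * v j + v j^2 := fun j => by ring
    rw [Finset.sum_congr rfl (fun j _ => e j), Finset.sum_add_distrib,
      Finset.sum_sub_distrib, Finset.sum_const, ← Finset.mul_sum]
    simp [Finset.card_univ, mul_comm]
  rw [Finset.sum_congr rfl (fun i _ => h i), Finset.sum_add_distrib, Finset.sum_sub_distrib,
    Finset.sum_const, Finset.card_univ, Fintype.card_fin, ← Finset.mul_sum, ← Finset.sum_mul,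
    show (∑ x : Fin n, 2 * v x) = 2 * ∑ x : Fin n, v x from by rw [Finset.mul_sum]]
  ring

lemma centered_sumsq {n : ℕ} (hn : (n:ℝ) ≠ 0) (v : Fin n → ℝ) :
    ∑ i : Fin n, ∑ j : Fin n, (v i - v j)^2
      = 2*(n:ℝ)*∑ i, (v i - (1/(n:ℝ))*∑ j, v j)^2 := by
  rw [expand_sumsq]
  have e : ∀ i : Fin n, (v i - (1/(n:ℝ))*∑ j, v j)^2
      = v i^2 - 2*(1/(n:ℝ))*(∑ j, v j)*v i + ((1/(n:ℝ))*∑ j, v j)^2 := fun i => by ring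
  rw [Finset.sum_congr rfl (fun i _ => e i), Finset.sum_add_distrib, Finset.sum_sub_distrib,
    Finset.sum_const, Finset.card_univ, Fintype.card_fin, ← Finset.mul_sum]
  field_simp
  have hn2 : (n:ℝ)^2 * ((n:ℝ)⁻¹)^2 = 1 := by field_simp
  linear_combination (-(∑ i, v i)^2) * hn2

lemma swap_sum {n : ℕ} (σ : Equiv.Perm (Fin n)) (c u : Fin n → ℝ) (i j : Fin n) :
    ∑ k, c (σ (Equiv.swap i j k)) * u k
      = (∑ k, c (σ k) * u k) - (c (σ i) - c (σ j)) * (u i - u j) := by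
  by_cases hij : i = j
  · subst hij; simp [Equiv.swap_self]
  · have e : ∀ k : Fin n, c (σ (Equiv.swap i j k)) * u k = c (σ k) * u k
        + ((if k = i then (c (σ j) - c (σ i)) * u i else 0)
          + (if k = j then (c (σ i) - c (σ j)) * u j else 0)) := by
      intro k
      rcases eq_or_ne k i with rfl | hki
      · simp [Equiv.swap_apply_left, hij]; ring
      · rcases eq_or_ne k j with rfl | hkj
        · simp [Equiv.swap_apply_right, hki]; ring
        · simp [Equiv.swap_apply_of_ne_of_ne hki hkj, hki, hkj]
    rw [Finset.sum_congr rfl (fun k _ => e k), Finset.sum_add_distrib, Finset.sum_add_distrib]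
    simp [Finset.sum_ite_eq']
    ring


set_option maxHeartbeats 1000000 in
/-- **Bound on the variance proxy `V₊(g_x, σ)`** (Proposition 4.11). For any `x ∈ Eⁿ` and
weight vector `w` with minimum `a` and maximum `b`,
`V₊(g_x,σ) = n⁻² ∑_{i,j} (g_x(σ) − g_x(σ τ_{i,j}))₊² ≤ (2/n)(b−a)² v₊(x)` for every
permutation `σ`; if moreover every `t ∈ T` takes values in `[-1,1]`, then
`V₊(g_x,σ) ≤ (8/n) ‖w‖²`. -/
theorem Vplus_bound
    {E : Type*} [MeasurableSpace E] {n : ℕ}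
    (T : Set (E → ℝ)) (hTmeas : ∀ t ∈ T, Measurable t)
    (x : Fin n → E)
    (hbdd : Bornology.IsBounded {v : Fin n → ℝ | ∃ t ∈ T, v = fun i => t (x i)})
    (w : Fin n → ℝ) (a b : ℝ)
    (ha : IsLeast (Set.range w) a) (hb : IsGreatest (Set.range w) b)
    (gx : Equiv.Perm (Fin n) → ℝ)
    (hgx : ∀ π : Equiv.Perm (Fin n), gx π = ⨆ t : T, ∑ i, w (π i) * (t : E → ℝ) (x i))
    (vplus : ℝ)
    (hvplus : vplus = ⨆ t : T,
      ∑ i, ((t : E → ℝ) (x i) - (1 / (n : ℝ)) * ∑ j, (t : E → ℝ) (x j)) ^ 2) :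
    (∀ σ : Equiv.Perm (Fin n),
      (1 / (n : ℝ) ^ 2) * ∑ i : Fin n, ∑ j : Fin n,
          (max (gx σ - gx (σ * Equiv.swap i j)) 0) ^ 2 ≤
        (2 / (n : ℝ)) * (b - a) ^ 2 * vplus) ∧
    ((∀ t ∈ T, ∀ e, t e ∈ Set.Icc (-1 : ℝ) 1) →
      ∀ σ : Equiv.Perm (Fin n),
        (1 / (n : ℝ) ^ 2) * ∑ i : Fin n, ∑ j : Fin n,
            (max (gx σ - gx (σ * Equiv.swap i j)) 0) ^ 2 ≤
          (8 / (n : ℝ)) * ∑ i, (w i) ^ 2) := by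
  classical
  obtain ⟨i0, -⟩ := ha.1
  have hn : 0 < n := i0.pos
  have hnR : (0:ℝ) < (n:ℝ) := Nat.cast_pos.2 hn
  have hab : a ≤ b := ha.2 hb.1
  have hwa : ∀ i, a ≤ w i := fun i => ha.2 ⟨i, rfl⟩
  have hwb : ∀ i, w i ≤ b := fun i => hb.2 ⟨i, rfl⟩
  -- uniform bound on values
  obtain ⟨C0, hC0⟩ := isBounded_iff_forall_norm_le.1 hbdd
  set C : ℝ := max C0 0 with hCdef
  have hC : 0 ≤ C := le_max_right _ _
  have hCb : ∀ t ∈ T, ∀ i, |t (x i)| ≤ C := by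
    intro t ht i
    have h1 : ‖(fun i => t (x i) : Fin n → ℝ)‖ ≤ C0 := hC0 _ ⟨t, ht, rfl⟩
    have h2 : ‖t (x i)‖ ≤ ‖(fun i => t (x i) : Fin n → ℝ)‖ :=
      norm_le_pi_norm (fun i => t (x i) : Fin n → ℝ) i
    calc |t (x i)| ≤ C0 := le_trans h2 h1
      _ ≤ C := le_max_left _ _
  rcases isEmpty_or_nonempty T with hT | hT
  · have hgx0 : ∀ π, gx π = 0 := fun π => by rw [hgx]; exact Real.iSup_of_isEmpty _
    have hv0 : vplus = 0 := by rw [hvplus]; exact Real.iSup_of_isEmpty _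
    constructor
    · intro σ
      simp [hgx0, hv0]
    · intro _ σ
      have h0 : (1 / (n : ℝ) ^ 2) * ∑ i : Fin n, ∑ j : Fin n,
          (max (gx σ - gx (σ * Equiv.swap i j)) 0) ^ 2 = 0 := by simp [hgx0]
      rw [h0]; positivity
  · -- nonempty T
    have hbddg : ∀ π : Equiv.Perm (Fin n),
        BddAbove (Set.range fun t : T => ∑ i, w (π i) * (t : E → ℝ) (x i)) := by
      intro π
      refine ⟨∑ i, |w (π i)| * C, ?_⟩
      rintro _ ⟨t, rfl⟩
      refine Finset.sum_le_sum fun i _ => ?_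
      calc w (π i) * (t : E → ℝ) (x i) ≤ |w (π i) * (t : E → ℝ) (x i)| := le_abs_self _
        _ = |w (π i)| * |(t : E → ℝ) (x i)| := abs_mul _ _
        _ ≤ |w (π i)| * C := by
            exact mul_le_mul_of_nonneg_left (hCb _ t.2 i) (abs_nonneg _)
    have hmb : ∀ t : T, |(1/(n:ℝ)) * ∑ j, (t : E → ℝ) (x j)| ≤ C := by
      intro t
      rw [abs_mul]
      have h1 : |∑ j, (t : E → ℝ) (x j)| ≤ ∑ j : Fin n, C :=
        le_trans (Finset.abs_sum_le_sum_abs _ _) (Finset.sum_le_sum fun j _ => hCb _ t.2 j)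
      rw [Finset.sum_const, Finset.card_univ, Fintype.card_fin, nsmul_eq_mul] at h1
      calc |1/(n:ℝ)| * |∑ j, (t : E → ℝ) (x j)| ≤ |1/(n:ℝ)| * ((n:ℝ) * C) :=
            mul_le_mul_of_nonneg_left h1 (abs_nonneg _)
        _ = C := by rw [abs_of_pos (by positivity)]; field_simp
    have hbddv : BddAbove (Set.range fun t : T =>
        ∑ i, ((t : E → ℝ) (x i) - (1/(n:ℝ)) * ∑ j, (t : E → ℝ) (x j)) ^ 2) := by
      refine ⟨∑ _i : Fin n, (2*C)^2, ?_⟩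
      rintro _ ⟨t, rfl⟩
      refine Finset.sum_le_sum fun i _ => ?_
      have h1 := hCb _ t.2 i
      have h2 := hmb t
      have h3 : |(t : E → ℝ) (x i) - (1/(n:ℝ)) * ∑ j, (t : E → ℝ) (x j)| ≤ 2*C := by
        calc |(t : E → ℝ) (x i) - (1/(n:ℝ)) * ∑ j, (t : E → ℝ) (x j)|
            ≤ |(t : E → ℝ) (x i)| + |(1/(n:ℝ)) * ∑ j, (t : E → ℝ) (x j)| := abs_sub _ _
          _ ≤ 2*C := by linarith
      calc ((t : E → ℝ) (x i) - (1/(n:ℝ)) * ∑ j, (t : E → ℝ) (x j))^2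
          = |(t : E → ℝ) (x i) - (1/(n:ℝ)) * ∑ j, (t : E → ℝ) (x j)|^2 := (sq_abs _).symm
        _ ≤ (2*C)^2 := by
            apply pow_le_pow_left₀ (abs_nonneg _) h3
    -- key: near-optimal t gives pointwise bound
    have key : ∀ σ : Equiv.Perm (Fin n), ∀ ε > (0:ℝ), ∃ t : T, ∀ i j : Fin n,
        max (gx σ - gx (σ * Equiv.swap i j)) 0
          ≤ ε + |w (σ i) - w (σ j)| * |(t : E → ℝ) (x i) - (t : E → ℝ) (x j)| := by
      intro σ ε hε
      have h1 : gx σ - ε < ⨆ t : T, ∑ i, w (σ i) * (t : E → ℝ) (x i) := by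
        rw [← hgx]; linarith
      obtain ⟨t, ht⟩ := exists_lt_of_lt_ciSup h1
      refine ⟨t, fun i j => ?_⟩
      have h2 : ∑ k, w ((σ * Equiv.swap i j) k) * (t : E → ℝ) (x k) ≤ gx (σ * Equiv.swap i j) := by
        rw [hgx]; exact le_ciSup (hbddg _) t
      have h3 : ∑ k, w ((σ * Equiv.swap i j) k) * (t : E → ℝ) (x k)
          = (∑ k, w (σ k) * (t : E → ℝ) (x k))
            - (w (σ i) - w (σ j)) * ((t : E → ℝ) (x i) - (t : E → ℝ) (x j)) := by
        simpa [Equiv.Perm.mul_apply] using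
          swap_sum σ w (fun k => (t : E → ℝ) (x k)) i j
      have h4 : (w (σ i) - w (σ j)) * ((t : E → ℝ) (x i) - (t : E → ℝ) (x j))
          ≤ |w (σ i) - w (σ j)| * |(t : E → ℝ) (x i) - (t : E → ℝ) (x j)| := by
        calc _ ≤ |(w (σ i) - w (σ j)) * ((t : E → ℝ) (x i) - (t : E → ℝ) (x j))| := le_abs_self _
          _ = _ := abs_mul _ _
      apply max_le
      · rw [h3] at h2; linarith
      · positivity
    constructor
    · -- Part 1
      intro σ
      refine le_of_forall_pos_le_add fun δ hδ => ?_
      have hden : (0:ℝ) < 1 + 4*(b-a)*C := by nlinarith [mul_nonneg (sub_nonneg.2 hab) hC]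
      set ε : ℝ := min 1 (δ / (1 + 4*(b-a)*C)) with hεdef
      have hε : 0 < ε := lt_min one_pos (div_pos hδ hden)
      have hε1 : ε ≤ 1 := min_le_left _ _
      have hε2 : ε * (1 + 4*(b-a)*C) ≤ δ := by
        rw [← le_div_iff₀ hden]; exact min_le_right _ _
      obtain ⟨t, ht⟩ := key σ ε hε
      set u : Fin n → ℝ := fun k => (t : E → ℝ) (x k) with hu
      -- pointwise square bound
      have hpt : ∀ i j : Fin n, (max (gx σ - gx (σ * Equiv.swap i j)) 0)^2
          ≤ ε^2 + 4*ε*(b-a)*C + (b-a)^2 * (u i - u j)^2 := by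
        intro i j
        have hwd : |w (σ i) - w (σ j)| ≤ b - a := by
          rw [abs_le]; constructor <;> [linarith [hwa (σ i), hwb (σ j)]; linarith [hwb (σ i), hwa (σ j)]]
        have hud : |u i - u j| ≤ 2*C := by
          calc |u i - u j| ≤ |u i| + |u j| := abs_sub _ _
            _ ≤ 2*C := by linarith [hCb _ t.2 i, hCb _ t.2 j]
        have h5 : max (gx σ - gx (σ * Equiv.swap i j)) 0 ≤ ε + (b-a) * |u i - u j| := by
          refine le_trans (ht i j) ?_
          have := mul_le_mul_of_nonneg_right hwd (abs_nonneg (u i - u j))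
          linarith
        have h6 : 0 ≤ max (gx σ - gx (σ * Equiv.swap i j)) 0 := le_max_right _ _
        calc (max (gx σ - gx (σ * Equiv.swap i j)) 0)^2 ≤ (ε + (b-a) * |u i - u j|)^2 :=
              pow_le_pow_left₀ h6 h5 2
          _ ≤ ε^2 + 4*ε*(b-a)*C + (b-a)^2 * (u i - u j)^2 := by
              have habs : |u i - u j|^2 = (u i - u j)^2 := sq_abs _
              have h7 : 0 ≤ (b-a) := sub_nonneg.2 hab
              have h8 : 0 ≤ |u i - u j| := abs_nonneg _
              nlinarith [mul_le_mul_of_nonneg_left hud (mul_nonneg hε.le h7)]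
      have hsum : ∑ i : Fin n, ∑ j : Fin n, (max (gx σ - gx (σ * Equiv.swap i j)) 0)^2
          ≤ (n:ℝ)^2 * (ε^2 + 4*ε*(b-a)*C) + (b-a)^2 * (2*(n:ℝ) * vplus) := by
        have hvt : ∑ i, (u i - (1/(n:ℝ))*∑ j, u j)^2 ≤ vplus := by
          rw [hvplus]; exact le_ciSup hbddv t
        calc ∑ i : Fin n, ∑ j : Fin n, (max (gx σ - gx (σ * Equiv.swap i j)) 0)^2
            ≤ ∑ i : Fin n, ∑ j : Fin n, (ε^2 + 4*ε*(b-a)*C + (b-a)^2 * (u i - u j)^2) :=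
              Finset.sum_le_sum fun i _ => Finset.sum_le_sum fun j _ => hpt i j
          _ = (n:ℝ)^2 * (ε^2 + 4*ε*(b-a)*C) + (b-a)^2 * ∑ i : Fin n, ∑ j : Fin n, (u i - u j)^2 := by
              rw [sum_const_add_fin (ε^2 + 4*ε*(b-a)*C) (fun i j => (b-a)^2 * (u i - u j)^2)]
              congr 1
              simp_rw [← Finset.mul_sum]
          _ = (n:ℝ)^2 * (ε^2 + 4*ε*(b-a)*C)
              + (b-a)^2 * (2*(n:ℝ) * ∑ i, (u i - (1/(n:ℝ))*∑ j, u j)^2) := by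
              rw [centered_sumsq hnR.ne' u]
          _ ≤ _ := by
              have h7 : (0:ℝ) ≤ (b-a)^2 := sq_nonneg _
              have h8 := mul_le_mul_of_nonneg_left
                (mul_le_mul_of_nonneg_left hvt (by positivity : (0:ℝ) ≤ 2*(n:ℝ))) h7
              linarith
      calc (1 / (n:ℝ)^2) * ∑ i : Fin n, ∑ j : Fin n, (max (gx σ - gx (σ * Equiv.swap i j)) 0)^2
          ≤ (1 / (n:ℝ)^2) * ((n:ℝ)^2 * (ε^2 + 4*ε*(b-a)*C) + (b-a)^2 * (2*(n:ℝ) * vplus)) := by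
            apply mul_le_mul_of_nonneg_left hsum (by positivity)
        _ = (ε^2 + 4*ε*(b-a)*C) + (2/(n:ℝ)) * (b-a)^2 * vplus := by
            field_simp
        _ ≤ (2/(n:ℝ)) * (b-a)^2 * vplus + δ := by
            have : ε^2 + 4*ε*(b-a)*C ≤ δ := by nlinarith
            linarith
    · -- Part 2
      intro hIcc σ
      refine le_of_forall_pos_le_add fun δ hδ => ?_
      have hden : (0:ℝ) < 1 + 4*(b-a) := by nlinarith [sub_nonneg.2 hab]
      set ε : ℝ := min 1 (δ / (1 + 4*(b-a))) with hεdef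
      have hε : 0 < ε := lt_min one_pos (div_pos hδ hden)
      have hε1 : ε ≤ 1 := min_le_left _ _
      have hε2 : ε * (1 + 4*(b-a)) ≤ δ := by
        rw [← le_div_iff₀ hden]; exact min_le_right _ _
      obtain ⟨t, ht⟩ := key σ ε hε
      have hpt : ∀ i j : Fin n, (max (gx σ - gx (σ * Equiv.swap i j)) 0)^2
          ≤ ε^2 + 4*ε*(b-a) + 4 * (w (σ i) - w (σ j))^2 := by
        intro i j
        have hwd : |w (σ i) - w (σ j)| ≤ b - a := by
          rw [abs_le]; constructor <;> [linarith [hwa (σ i), hwb (σ j)]; linarith [hwb (σ i), hwa (σ j)]]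
        have hti := hIcc _ t.2 (x i)
        have htj := hIcc _ t.2 (x j)
        have hud : |(t : E → ℝ) (x i) - (t : E → ℝ) (x j)| ≤ 2 := by
          rw [abs_le]
          constructor <;> [linarith [hti.1, htj.2]; linarith [hti.2, htj.1]]
        have h5 : max (gx σ - gx (σ * Equiv.swap i j)) 0 ≤ ε + 2 * |w (σ i) - w (σ j)| := by
          refine le_trans (ht i j) ?_
          have := mul_le_mul_of_nonneg_left hud (abs_nonneg (w (σ i) - w (σ j)))
          linarith
        have h6 : 0 ≤ max (gx σ - gx (σ * Equiv.swap i j)) 0 := le_max_right _ _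
        calc (max (gx σ - gx (σ * Equiv.swap i j)) 0)^2 ≤ (ε + 2 * |w (σ i) - w (σ j)|)^2 :=
              pow_le_pow_left₀ h6 h5 2
          _ ≤ ε^2 + 4*ε*(b-a) + 4 * (w (σ i) - w (σ j))^2 := by
              have habs : |w (σ i) - w (σ j)|^2 = (w (σ i) - w (σ j))^2 := sq_abs _
              have h8 : 0 ≤ |w (σ i) - w (σ j)| := abs_nonneg _
              nlinarith [mul_le_mul_of_nonneg_left hwd hε.le]
      have hreindex : ∑ i : Fin n, ∑ j : Fin n, (w (σ i) - w (σ j))^2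
          = ∑ i : Fin n, ∑ j : Fin n, (w i - w j)^2 := by
        rw [← Equiv.sum_comp σ (fun i => ∑ j : Fin n, (w i - w j)^2)]
        refine Finset.sum_congr rfl fun i _ => ?_
        exact Equiv.sum_comp σ (fun j => (w (σ i) - w j)^2)
      have hwsum : ∑ i : Fin n, ∑ j : Fin n, (w (σ i) - w (σ j))^2 ≤ 2*(n:ℝ) * ∑ i, (w i)^2 := by
        rw [hreindex, expand_sumsq]
        nlinarith [sq_nonneg (∑ i, w i)]
      have hsum : ∑ i : Fin n, ∑ j : Fin n, (max (gx σ - gx (σ * Equiv.swap i j)) 0)^2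
          ≤ (n:ℝ)^2 * (ε^2 + 4*ε*(b-a)) + 4 * (2*(n:ℝ) * ∑ i, (w i)^2) := by
        calc ∑ i : Fin n, ∑ j : Fin n, (max (gx σ - gx (σ * Equiv.swap i j)) 0)^2
            ≤ ∑ i : Fin n, ∑ j : Fin n, (ε^2 + 4*ε*(b-a) + 4 * (w (σ i) - w (σ j))^2) :=
              Finset.sum_le_sum fun i _ => Finset.sum_le_sum fun j _ => hpt i j
          _ = (n:ℝ)^2 * (ε^2 + 4*ε*(b-a)) + 4 * ∑ i : Fin n, ∑ j : Fin n, (w (σ i) - w (σ j))^2 := by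
              rw [sum_const_add_fin (ε^2 + 4*ε*(b-a)) (fun i j => 4 * (w (σ i) - w (σ j))^2)]
              congr 1
              simp_rw [← Finset.mul_sum]
          _ ≤ _ := by linarith
      calc (1 / (n:ℝ)^2) * ∑ i : Fin n, ∑ j : Fin n, (max (gx σ - gx (σ * Equiv.swap i j)) 0)^2
          ≤ (1 / (n:ℝ)^2) * ((n:ℝ)^2 * (ε^2 + 4*ε*(b-a)) + 4 * (2*(n:ℝ) * ∑ i, (w i)^2)) := by
            apply mul_le_mul_of_nonneg_left hsum (by positivity)
        _ = (ε^2 + 4*ε*(b-a)) + (8/(n:ℝ)) * ∑ i, (w i)^2 := by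
            field_simp; ring
        _ ≤ (8/(n:ℝ)) * ∑ i, (w i)^2 + δ := by
            have : ε^2 + 4*ε*(b-a) ≤ δ := by nlinarith
            linarith
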